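/- If ε is an elementary dihomomorphism of a digraph D, then dac(D) − 2 ≤ dac(ε(D)) ≤ dac(D). Moreover, for every digraph D that has at least one pair of nonadjacent vertices, there exists an elementary dihomomorphism ε of D such that dac(ε(D)) = dac(D). -/

import Mathlib

/-- The subset `S` of vertices induces an acyclic subdigraph of the digraph with
arc relation `A` (i.e. there is no directed cycle all of whose vertices lie in `S`). -/
def AcyclicSet {V : Type*} (A : V → V → Prop) (S : Set V) : Prop :=
  ∀ v : V, ¬ Relation.TransGen (fun x y => x ∈ S ∧ y ∈ S ∧ A x y) v v

/-- `c` is an acyclic vertex coloring of the digraph `A` with `k` colors: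
`c` is surjective and every chromatic class induces an acyclic subdigraph. -/
def IsAcyclicColoring {V : Type*} (A : V → V → Prop) {k : ℕ} (c : V → Fin k) : Prop :=
  Function.Surjective c ∧ ∀ i : Fin k, AcyclicSet A {v | c v = i}

/-- `c` is a complete vertex coloring of the digraph `A` with `k` colors:
`c` is surjective and for every ordered pair of distinct colors `(i, j)` there is
an arc `(u, v)` with `c u = i` and `c v = j`. -/
def IsCompleteColoring {V : Type*} (A : V → V → Prop) {k : ℕ} (c : V → Fin k) : Prop :=
  Function.Surjective c ∧
    ∀ i j : Fin k, i ≠ j → ∃ u v : V, A u v ∧ c u = i ∧ c v = j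

/-- The diachromatic number: the largest `k` admitting a complete acyclic `k`-coloring. -/
noncomputable def dac {V : Type*} (A : V → V → Prop) : ℕ :=
  sSup {k | ∃ c : V → Fin k, IsAcyclicColoring A c ∧ IsCompleteColoring A c}

/-- The dichromatic number: the smallest `k` admitting an acyclic `k`-coloring. -/
noncomputable def dc {V : Type*} (A : V → V → Prop) : ℕ :=
  sInf {k | ∃ c : V → Fin k, IsAcyclicColoring A c}

/-- The pseudoachromatic number: the largest `k` admitting a complete `k`-coloring. -/
noncomputable def psi {V : Type*} (A : V → V → Prop) : ℕ :=
  sSup {k | ∃ c : V → Fin k, IsCompleteColoring A c}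

/-- `A` is a tournament: no loops, and for distinct vertices exactly one of the
two possible arcs is present. -/
def IsTournament {V : Type*} (A : V → V → Prop) : Prop :=
  (∀ v : V, ¬ A v v) ∧ ∀ u v : V, u ≠ v → (A u v ↔ ¬ A v u)

/-- The elementary dihomomorphism of the digraph `A` identifying the vertex `u`
with the vertex `v`: the resulting digraph on `V \\ {u}`. -/
def epsRel {V : Type*} (A : V → V → Prop) (u v : V) :
    {w : V // w ≠ u} → {w : V // w ≠ u} → Prop :=
  fun x y =>
    A x.1 y.1 ∨ (x.1 = v ∧ y.1 ≠ v ∧ A u y.1) ∨ (y.1 = v ∧ x.1 ≠ v ∧ A x.1 u)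

open Relation
section AuxLemmas

section Generic
variable {α : Type*}

/-- first-step decomposition of TransGen -/
lemma tg_head_decomp {R : α → α → Prop} {a b : α} (h : TransGen R a b) :
    ∃ c, R a c ∧ ReflTransGen R c b := by
  induction h with
  | single h => exact ⟨_, h, ReflTransGen.refl⟩
  | tail _ hbc ih => obtain ⟨c, h1, h2⟩ := ih; exact ⟨c, h1, h2.tail hbc⟩

lemma rtg_avoid_endpoint {R : α → α → Prop} {m : α} {a b : α}
    (h : ReflTransGen (fun x y => R x y ∧ x ≠ m ∧ y ≠ m) a b) : a = b ∨ b ≠ m := by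
  induction h with
  | refl => exact Or.inl rfl
  | tail _ hstep _ => exact Or.inr hstep.2.2

/-- segment decomposition: a walk either avoids m or reaches m after an m-free prefix -/
lemma rtg_seg {R : α → α → Prop} {m b : α} :
    ∀ {a : α}, ReflTransGen R a b → a ≠ m →
      ReflTransGen (fun x y => R x y ∧ x ≠ m ∧ y ≠ m) a b ∨
        ∃ q, q ≠ m ∧ ReflTransGen (fun x y => R x y ∧ x ≠ m ∧ y ≠ m) a q ∧ R q m ∧
          ReflTransGen R m b := by
  intro a h
  induction h using ReflTransGen.head_induction_on with
  | refl => exact fun _ => Or.inl ReflTransGen.refl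
  | head h' h ih =>
    rename_i x c
    intro hx
    by_cases hc : c = m
    · subst hc
      exact Or.inr ⟨x, hx, ReflTransGen.refl, h', h⟩
    · rcases ih hc with h1 | ⟨q, hq, h1, h2, h3⟩
      · exact Or.inl (ReflTransGen.head ⟨h', hx, hc⟩ h1)
      · exact Or.inr ⟨q, hq, ReflTransGen.head ⟨h', hx, hc⟩ h1, h2, h3⟩

/-- Criterion for overall acyclicity in terms of the special vertex `m`. -/
lemma nocyc {R : α → α → Prop} {m : α}
    (H1 : ∀ a, ¬ TransGen (fun x y => R x y ∧ x ≠ m ∧ y ≠ m) a a)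
    (H2 : ¬ R m m)
    (H3 : ¬ ∃ p q, p ≠ m ∧ q ≠ m ∧ R m p ∧
        ReflTransGen (fun x y => R x y ∧ x ≠ m ∧ y ≠ m) p q ∧ R q m) :
    ∀ a, ¬ TransGen R a a := by
  have hm : ¬ TransGen R m m := by
    intro h
    obtain ⟨c, hmc, hcm⟩ := tg_head_decomp h
    by_cases hc : c = m
    · exact H2 (hc ▸ hmc)
    · rcases rtg_seg hcm hc with h1 | ⟨q, hq, h1, h2, _⟩
      · rcases rtg_avoid_endpoint h1 with rfl | hne
        · exact hc rfl
        · exact hne rfl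
      · exact H3 ⟨c, q, hc, hq, hmc, h1, h2⟩
  intro a h
  by_cases ha : a = m
  · exact hm (ha ▸ h)
  · obtain ⟨c, hac, hca⟩ := tg_head_decomp h
    by_cases hc : c = m
    · subst hc
      exact hm (TransGen.tail' hca hac)
    · rcases rtg_seg hca hc with h1 | ⟨q, hq, h1, h2, h3⟩
      · exact H1 a (TransGen.head' ⟨hac, ha, hc⟩ h1)
      · refine hm ?_
        have r1 : ReflTransGen R m c := (h3.tail hac)
        have r2 : ReflTransGen R c q := h1.lift id (fun _ _ h => h.1)
        exact TransGen.tail' (r1.trans r2) h2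
  
/-- Union of two acyclic sets with no arcs from P to Q is acyclic. -/
lemma acyclicSet_union {B : α → α → Prop} {P Q : Set α}
    (hP : AcyclicSet B P) (hQ : AcyclicSet B Q)
    (hnoarc : ¬ ∃ x y, B x y ∧ x ∈ P ∧ y ∈ Q) :
    AcyclicSet B (P ∪ Q) := by
  have claimQ : ∀ a b, TransGen (fun x y => x ∈ P ∪ Q ∧ y ∈ P ∪ Q ∧ B x y) a b → b ∈ Q →
      TransGen (fun x y => x ∈ Q ∧ y ∈ Q ∧ B x y) a b := by
    intro a b h hb
    induction h with
    | single h =>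
      rcases h with ⟨ha, _, hB⟩
      rcases ha with ha | ha
      · by_cases haQ : a ∈ Q
        · exact TransGen.single ⟨haQ, hb, hB⟩
        · exact absurd ⟨a, _, hB, ha, hb⟩ hnoarc
      · exact TransGen.single ⟨ha, hb, hB⟩
    | tail h hstep ih =>
      rename_i b' c
      rcases hstep with ⟨hb', _, hB⟩
      have hb'Q : b' ∈ Q := by
        by_cases hq : b' ∈ Q
        · exact hq
        · rcases hb' with hp | hp
          · exact absurd ⟨b', _, hB, hp, hb⟩ hnoarc
          · exact absurd hp hq
      exact (ih hb'Q).tail ⟨hb'Q, hb, hB⟩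
  have claimP : ∀ a b, TransGen (fun x y => x ∈ P ∪ Q ∧ y ∈ P ∪ Q ∧ B x y) a b →
      a ∈ P → a ∉ Q → TransGen (fun x y => x ∈ P ∧ y ∈ P ∧ B x y) a b := by
    intro a b h
    induction h using TransGen.head_induction_on with
    | single h =>
      rcases h with ⟨_, hb, hB⟩
      intro haP haQ
      have hbP : b ∈ P := by
        rcases hb with h | h
        · exact h
        · exact absurd ⟨_, _, hB, haP, h⟩ hnoarc
      exact TransGen.single ⟨haP, hbP, hB⟩
    | head h' h ih =>
      rename_i x c
      intro hxP hxQ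
      rcases h' with ⟨_, hc, hB⟩
      have hcQ : c ∉ Q := fun hq => hnoarc ⟨_, _, hB, hxP, hq⟩
      have hcP : c ∈ P := by
        rcases hc with h | h
        · exact h
        · exact absurd h hcQ
      exact TransGen.head ⟨hxP, hcP, hB⟩ (ih hcP hcQ)
  intro w hw
  by_cases hwQ : w ∈ Q
  · exact hQ w (claimQ w w hw hwQ)
  · have hwP : w ∈ P := by
      obtain ⟨c, hstep, _⟩ := tg_head_decomp hw
      rcases hstep.1 with h | h
      · exact h
      · exact absurd h hwQ
    exact hP w (claimP w w hw hwP hwQ)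

lemma acyclicSet_of_subsingleton {B : α → α → Prop} (hB : ∀ x, ¬ B x x) {S : Set α}
    (hS : S.Subsingleton) : AcyclicSet B S := by
  intro w hw
  obtain ⟨c, ⟨hx, hy, hB'⟩, _⟩ := tg_head_decomp hw
  exact hB w (hS hx hy ▸ hB')

lemma acyclicSet_empty {B : α → α → Prop} (hB : ∀ x, ¬ B x x) : AcyclicSet B (∅ : Set α) :=
  acyclicSet_of_subsingleton hB Set.subsingleton_empty

lemma exists_min_rel [Fintype α] (T : α → α → Prop) (htrans : Transitive T)
    (hirr : ∀ a, ¬ T a a) (S : Finset α) (hS : S.Nonempty) :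
    ∃ m ∈ S, ∀ x ∈ S, ¬ T x m := by
  classical
  obtain ⟨m, hm, hmin⟩ := S.exists_min_image (fun a => (S.filter (fun x => T x a)).card) hS
  refine ⟨m, hm, fun x hx hTxm => ?_⟩
  have hsub : S.filter (fun y => T y x) ⊂ S.filter (fun y => T y m) := by
    refine Finset.ssubset_iff_of_subset ?_ |>.2 ⟨x, ?_, ?_⟩
    · intro y hy
      rcases Finset.mem_filter.1 hy with ⟨hyS, hT⟩
      exact Finset.mem_filter.2 ⟨hyS, htrans hT hTxm⟩
    · exact Finset.mem_filter.2 ⟨hx, hTxm⟩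
    · intro hmem
      exact hirr x (Finset.mem_filter.1 hmem).2
  exact absurd (Finset.card_lt_card hsub) (not_lt.2 (hmin x hx))

end Generic

section Merge
variable {V' : Type*} {β : Type*}

lemma merge_lemma [Fintype V'] [Fintype β] [DecidableEq β] (B : V' → V' → Prop)
    {ι : Type*} [Fintype ι] :
    ∀ (n : ℕ) (c : V' → β), (Finset.image c Finset.univ).card ≤ n →
    (∀ b : β, AcyclicSet B {x | c x = b}) →
    ∀ (reps : ι → β), (∀ a, ∃ x, c x = reps a) →
    (∀ a b : ι, a ≠ b → reps a ≠ reps b ∧ ∃ x y, B x y ∧ c x = reps a ∧ c y = reps b) →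
    ∃ (m : ℕ) (c' : V' → Fin m), IsAcyclicColoring B c' ∧ IsCompleteColoring B c' ∧
      Fintype.card ι ≤ m := by
  intro n
  induction n with
  | zero =>
    intro c hcard hac reps hreps hinv
    have hV : IsEmpty V' := by
      by_contra h
      rw [not_isEmpty_iff] at h
      obtain ⟨x⟩ := h
      have : c x ∈ Finset.image c Finset.univ := Finset.mem_image_of_mem c (Finset.mem_univ x)
      have := Finset.card_pos.2 ⟨_, this⟩
      omega
    have hι : IsEmpty ι := by
      by_contra h
      rw [not_isEmpty_iff] at h
      obtain ⟨a⟩ := h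
      obtain ⟨x, _⟩ := hreps a
      exact hV.elim x
    refine ⟨0, fun x => (hV.elim x), ⟨fun y => y.elim0, fun i => i.elim0⟩,
      ⟨fun y => y.elim0, fun i => i.elim0⟩, by simp [Fintype.card_eq_zero]⟩
  | succ n ih =>
    intro c hcard hac reps hreps hinv
    by_cases hcomp : ∀ i j : β, i ≠ j → (∃ x, c x = i) → (∃ y, c y = j) →
        ∃ x y, B x y ∧ c x = i ∧ c y = j
    · -- already complete on its image; convert to Fin
      set s := Finset.image c Finset.univ with hs
      have hmem : ∀ x, c x ∈ s := fun x => Finset.mem_image_of_mem c (Finset.mem_univ x)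
      let e : {b // b ∈ s} ≃ Fin s.card := s.equivFin
      have hsurj : Function.Surjective (fun x => e ⟨c x, hmem x⟩) := by
        intro y
        obtain ⟨x, _, hx⟩ := Finset.mem_image.1 (e.symm y).2
        refine ⟨x, ?_⟩
        show e ⟨c x, hmem x⟩ = y
        have h1 : (⟨c x, hmem x⟩ : {b // b ∈ s}) = e.symm y := Subtype.ext hx
        rw [h1, Equiv.apply_symm_apply]
      refine ⟨s.card, fun x => e ⟨c x, hmem x⟩, ⟨hsurj, ?_⟩, ⟨hsurj, ?_⟩, ?_⟩
      · -- acyclic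
        intro i
        have hset : {x | e ⟨c x, hmem x⟩ = i} = {x | c x = (e.symm i).1} := by
          ext x
          simp only [Set.mem_setOf_eq]
          constructor
          · intro h
            rw [← h, Equiv.symm_apply_apply]
          · intro h
            have : (⟨c x, hmem x⟩ : {b // b ∈ s}) = e.symm i := Subtype.ext h
            rw [this, Equiv.apply_symm_apply]
        rw [show {x | (fun x => e ⟨c x, hmem x⟩) x = i} = {x | c x = (e.symm i).1} from hset]
        exact hac _
      · -- complete
        intro i j hij
        have hbij : ((e.symm i : {b // b ∈ s}) : β) ≠ ((e.symm j : {b // b ∈ s}) : β) := by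
          intro h
          apply hij
          have h2 := congrArg e (Subtype.ext h : (e.symm i : {b // b ∈ s}) = e.symm j)
          rwa [Equiv.apply_symm_apply, Equiv.apply_symm_apply] at h2
        obtain ⟨xi, _, hxi⟩ := Finset.mem_image.1 (e.symm i).2
        obtain ⟨xj, _, hxj⟩ := Finset.mem_image.1 (e.symm j).2
        obtain ⟨x, y, hB, hx, hy⟩ := hcomp _ _ hbij ⟨xi, hxi⟩ ⟨xj, hxj⟩
        refine ⟨x, y, hB, ?_, ?_⟩
        · show e ⟨c x, hmem x⟩ = i
          have : (⟨c x, hmem x⟩ : {b // b ∈ s}) = e.symm i := Subtype.ext hx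
          rw [this, Equiv.apply_symm_apply]
        · show e ⟨c y, hmem y⟩ = j
          have : (⟨c y, hmem y⟩ : {b // b ∈ s}) = e.symm j := Subtype.ext hy
          rw [this, Equiv.apply_symm_apply]
      · -- cardinality
        have hinj : Function.Injective (fun a : ι => (⟨reps a, by
            obtain ⟨x, hx⟩ := hreps a
            exact hx ▸ hmem x⟩ : {b // b ∈ s})) := by
          intro a b hab
          by_contra hne
          exact (hinv a b hne).1 (congrArg Subtype.val hab)
        have := Fintype.card_le_of_injective _ hinj
        rwa [Fintype.card_coe] at this
    · -- merge two classes
      push_neg at hcomp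
      obtain ⟨i₀, j₀, hij, hi, hj, hnoarc⟩ := hcomp
      set r : β → β := fun b => if b = i₀ then j₀ else b with hr
      set c₂ : V' → β := fun x => r (c x) with hc₂
      have hc₂val : ∀ x, c₂ x = if c x = i₀ then j₀ else c x := fun x => rfl
      have himg : Finset.image c₂ Finset.univ ⊆ (Finset.image c Finset.univ).erase i₀ := by
        intro b hb
        obtain ⟨x, _, hx⟩ := Finset.mem_image.1 hb
        rw [hc₂val] at hx
        by_cases h : c x = i₀
        · rw [if_pos h] at hx
          refine Finset.mem_erase.2 ⟨hx ▸ hij.symm, ?_⟩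
          obtain ⟨y, hy⟩ := hj
          exact hx ▸ hy ▸ Finset.mem_image_of_mem c (Finset.mem_univ y)
        · rw [if_neg h] at hx
          exact Finset.mem_erase.2 ⟨hx ▸ h, hx ▸ Finset.mem_image_of_mem c (Finset.mem_univ x)⟩
      have hicard : i₀ ∈ Finset.image c Finset.univ := by
        obtain ⟨x, hx⟩ := hi
        exact hx ▸ Finset.mem_image_of_mem c (Finset.mem_univ x)
      have hcard₂ : (Finset.image c₂ Finset.univ).card ≤ n := by
        have h1 := Finset.card_le_card himg
        have h2 := Finset.card_erase_of_mem hicard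
        have h3 := Finset.card_pos.2 ⟨_, hicard⟩
        omega
      have hfib : ∀ b : β, {x | c₂ x = b} =
          if b = j₀ then ({x | c x = i₀} ∪ {x | c x = j₀})
          else if b = i₀ then ∅ else {x | c x = b} := by
        intro b
        ext x
        rw [Set.mem_setOf_eq, hc₂val]
        by_cases hb : b = j₀
        · subst hb
          simp only [if_pos rfl]
          by_cases h : c x = i₀
          · simp [h, hij]
          · simp [h]
        · rw [if_neg hb]
          by_cases hbi : b = i₀
          · rw [if_pos hbi]
            by_cases h : c x = i₀
            · simp [h, hbi, Ne.symm hij, hb]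
            · simp [h, hbi]
          · rw [if_neg hbi]
            by_cases h : c x = i₀
            · simp [h, Ne.symm hb, Ne.symm hbi]
            · simp [h]
      have hac₂ : ∀ b : β, AcyclicSet B {x | c₂ x = b} := by
        intro b
        rw [hfib b]
        by_cases hb : b = j₀
        · rw [if_pos hb]
          refine acyclicSet_union (hac i₀) (hac j₀) ?_
          intro ⟨x, y, hB, hx, hy⟩
          exact hnoarc x y hB hx hy
        · rw [if_neg hb]
          by_cases hbi : b = i₀
          · rw [if_pos hbi]
            intro w hw
            obtain ⟨_, ⟨hx, _⟩, _⟩ := tg_head_decomp hw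
            exact hx
          · rw [if_neg hbi]
            exact hac b
      have hreps₂ : ∀ a, ∃ x, c₂ x = r (reps a) := by
        intro a
        obtain ⟨x, hx⟩ := hreps a
        exact ⟨x, by rw [hc₂val, hr]; simp only; rw [hx]⟩
      have hinv₂ : ∀ a b : ι, a ≠ b → r (reps a) ≠ r (reps b) ∧
          ∃ x y, B x y ∧ c₂ x = r (reps a) ∧ c₂ y = r (reps b) := by
        intro a b hab
        obtain ⟨hne, x, y, hB, hx, hy⟩ := hinv a b hab
        constructor
        · intro heq
          rw [hr] at heq
          simp only at heq
          by_cases hai : reps a = i₀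
          · rw [if_pos hai] at heq
            by_cases hbi : reps b = i₀
            · exact hne (hai.trans hbi.symm)
            · rw [if_neg hbi] at heq
              exact hnoarc x y hB (hai ▸ hx) (heq ▸ hy)
          · rw [if_neg hai] at heq
            by_cases hbi : reps b = i₀
            · rw [if_pos hbi] at heq
              obtain ⟨_, x', y', hB', hx', hy'⟩ := hinv b a (Ne.symm hab)
              exact hnoarc x' y' hB' (hbi ▸ hx') (heq ▸ hy')
            · rw [if_neg hbi] at heq
              exact hne heq
        · exact ⟨x, y, hB, by rw [hc₂val, hr]; simp only; rw [hx],
            by rw [hc₂val, hr]; simp only; rw [hy]⟩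
      exact ih c₂ hcard₂ hac₂ (fun a => r (reps a)) hreps₂ hinv₂

end Merge

section DacFacts
variable {V' : Type*} [Fintype V'] [DecidableEq V'] (B : V' → V' → Prop)

lemma dacSet_bddAbove :
    BddAbove {k | ∃ c : V' → Fin k, IsAcyclicColoring B c ∧ IsCompleteColoring B c} := by
  refine ⟨Fintype.card V', fun k hk => ?_⟩
  obtain ⟨c, hc, _⟩ := hk
  have := Fintype.card_le_of_surjective c hc.1
  rwa [Fintype.card_fin] at this

lemma dacSet_nonempty (hirrB : ∀ x, ¬ B x x) :
    Set.Nonempty {k | ∃ c : V' → Fin k, IsAcyclicColoring B c ∧ IsCompleteColoring B c} := by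
  classical
  obtain ⟨m, c', h1, h2, _⟩ := merge_lemma B (ι := Empty) (Finset.image id Finset.univ).card
    (id : V' → V')
    le_rfl
    (fun b => acyclicSet_of_subsingleton hirrB (fun x hx y hy => hx.trans hy.symm))
    Empty.elim (fun a => a.elim) (fun a => a.elim)
  exact ⟨m, c', h1, h2⟩

lemma dac_mem (hirrB : ∀ x, ¬ B x x) :
    ∃ c : V' → Fin (dac B), IsAcyclicColoring B c ∧ IsCompleteColoring B c :=
  Nat.sSup_mem (dacSet_nonempty B hirrB) (dacSet_bddAbove B)

lemma mem_le_dac {k : ℕ} (c : V' → Fin k) (h1 : IsAcyclicColoring B c)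
    (h2 : IsCompleteColoring B c) : k ≤ dac B :=
  le_csSup (dacSet_bddAbove B) ⟨c, h1, h2⟩

end DacFacts

lemma epsRel_irrefl {V : Type*} (A : V → V → Prop) (hirr : ∀ v, ¬ A v v) (u v : V) :
    ∀ x, ¬ epsRel A u v x x := by
  rintro x (h | ⟨h1, h2, _⟩ | ⟨h1, h2, _⟩)
  · exact hirr _ h
  · exact h2 h1
  · exact h2 h1

section Upper
variable {V : Type*} [Fintype V] [DecidableEq V]

lemma dac_eps_le (A : V → V → Prop) (hirr : ∀ v, ¬ A v v) (u v : V) (huv : u ≠ v)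
    (hna : ¬(A u v ∧ A v u)) : dac (epsRel A u v) ≤ dac A := by
  classical
  obtain ⟨c', hA', hC'⟩ := dac_mem (epsRel A u v) (epsRel_irrefl A hirr u v)
  set φ : V → {w : V // w ≠ u} := fun w => if h : w = u then ⟨v, Ne.symm huv⟩ else ⟨w, h⟩ with hφ
  have hφne : ∀ (w : V) (h : w ≠ u), φ w = ⟨w, h⟩ := fun w h => dif_neg h
  have hφu : φ u = ⟨v, Ne.symm huv⟩ := dif_pos rfl
  set c : V → Fin (dac (epsRel A u v)) := fun w => c' (φ w) with hc
  have hcval : ∀ (w : V) (h : w ≠ u), c w = c' ⟨w, h⟩ := fun w h => by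
    rw [hc]; simp only; rw [hφne w h]
  have hcu : c u = c' ⟨v, Ne.symm huv⟩ := by rw [hc]; simp only; rw [hφu]
  have hcsub : ∀ x : {w : V // w ≠ u}, c x.1 = c' x := fun x => by
    rw [hcval x.1 x.2]
  refine mem_le_dac A c ⟨?_, ?_⟩ ⟨?_, ?_⟩
  · -- surjective
    intro i
    obtain ⟨x, hx⟩ := hA'.1 i
    exact ⟨x.1, (hcsub x).trans hx⟩
  · -- acyclic
    intro i w hw
    -- step lemma
    have step : ∀ a b : V, (a ∈ {w | c w = i} ∧ b ∈ {w | c w = i} ∧ A a b) →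
        ((φ a ∈ {x | c' x = i} ∧ φ b ∈ {x | c' x = i} ∧ epsRel A u v (φ a) (φ b)) ∨
          (φ a = φ b ∧ A a b ∧ ((a = u ∧ b = v) ∨ (a = v ∧ b = u)))) := by
      rintro a b ⟨ha, hb, hAab⟩
      have hca : c' (φ a) = i := ha
      have hcb : c' (φ b) = i := hb
      by_cases hau : a = u
      · by_cases hbu : b = u
        · exact absurd (by rw [hau, hbu] at hAab; exact hAab) (hirr u)
        · by_cases hbv : b = v
          · refine Or.inr ⟨?_, hAab, Or.inl ⟨hau, hbv⟩⟩
            rw [hau, hbv]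
            exact hφu.trans (hφne v (Ne.symm huv)).symm
          · refine Or.inl ⟨hca, hcb, ?_⟩
            rw [hau, hφu, hφne b hbu]
            exact Or.inr (Or.inl ⟨rfl, hbv, by rw [hau] at hAab; exact hAab⟩)
      · by_cases hbu : b = u
        · by_cases hav : a = v
          · refine Or.inr ⟨?_, hAab, Or.inr ⟨hav, hbu⟩⟩
            rw [hav, hbu]
            exact ((hφne v (Ne.symm huv)).trans hφu.symm)
          · refine Or.inl ⟨hca, hcb, ?_⟩
            rw [hbu, hφu, hφne a hau]
            exact Or.inr (Or.inr ⟨rfl, hav, by rw [hbu] at hAab; exact hAab⟩)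
        · refine Or.inl ⟨hca, hcb, ?_⟩
          rw [hφne a hau, hφne b hbu]
          exact Or.inl hAab
    have PHI : ∀ a b : V,
        Relation.TransGen (fun x y => x ∈ {w | c w = i} ∧ y ∈ {w | c w = i} ∧ A x y) a b →
        Relation.TransGen (fun x y => x ∈ {x | c' x = i} ∧ y ∈ {x | c' x = i} ∧
            epsRel A u v x y) (φ a) (φ b) ∨
          (φ a = φ b ∧ A a b ∧ ((a = u ∧ b = v) ∨ (a = v ∧ b = u))) := by
      intro a b h
      induction h with
      | single h => exact (step _ _ h).imp_left Relation.TransGen.single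
      | tail hab hstep ih =>
        rename_i b' b
        rcases step _ _ hstep with hs | ⟨he, hA2, hp2⟩
        · rcases ih with ht | ⟨he1, _, _⟩
          · exact Or.inl (ht.tail hs)
          · exact Or.inl (he1 ▸ Relation.TransGen.single hs)
        · rcases ih with ht | ⟨he1, hA1, hp1⟩
          · exact Or.inl (he ▸ ht)
          · exfalso
            rcases hp1 with ⟨ha, hb'⟩ | ⟨ha, hb'⟩
            · rcases hp2 with ⟨h1, _⟩ | ⟨h1, h2⟩
              · exact huv (hb'.symm.trans h1).symm
              · rw [ha, hb'] at hA1
                rw [h1, h2] at hA2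
                exact hna ⟨hA1, hA2⟩
            · rcases hp2 with ⟨h1, h2⟩ | ⟨h1, _⟩
              · rw [ha, hb'] at hA1
                rw [h1, h2] at hA2
                exact hna ⟨hA2, hA1⟩
              · exact huv (hb'.symm.trans h1)
    rcases PHI w w hw with ht | ⟨_, _, ⟨h1, h2⟩ | ⟨h1, h2⟩⟩
    · exact hA'.2 i (φ w) ht
    · exact huv (h1.symm.trans h2)
    · exact huv (h2.symm.trans h1)
  · -- surjective
    intro i
    obtain ⟨x, hx⟩ := hA'.1 i
    exact ⟨x.1, (hcsub x).trans hx⟩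
  · -- complete
    intro i j hij
    obtain ⟨x, y, hxy, hcx, hcy⟩ := hC'.2 i j hij
    rcases hxy with h1 | ⟨h1, h2, h3⟩ | ⟨h1, h2, h3⟩
    · exact ⟨x.1, y.1, h1, (hcsub x).trans hcx, (hcsub y).trans hcy⟩
    · refine ⟨u, y.1, h3, ?_, (hcsub y).trans hcy⟩
      rw [hcu]
      rw [show (⟨v, Ne.symm huv⟩ : {w : V // w ≠ u}) = x from Subtype.ext h1.symm]
      exact hcx
    · refine ⟨x.1, u, h3, (hcsub x).trans hcx, ?_⟩
      rw [hcu]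
      rw [show (⟨v, Ne.symm huv⟩ : {w : V // w ≠ u}) = y from Subtype.ext h1.symm]
      exact hcy

end Upper

section Lower
variable {V : Type*} [Fintype V] [DecidableEq V]

lemma dac_sub_two_le (A : V → V → Prop) (hirr : ∀ v, ¬ A v v) (u v : V) (huv : u ≠ v) :
    dac A - 2 ≤ dac (epsRel A u v) := by
  classical
  obtain ⟨ς, hςa, hςc⟩ := dac_mem A hirr
  set i₀ := ς u with hi₀
  set j₀ := ς v with hj₀
  set B := epsRel A u v with hB
  -- initial coloring of the image digraph
  set c₀ : {w : V // w ≠ u} → (Fin (dac A) ⊕ {w : V // w ≠ u}) :=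
    fun w => if ς w.1 = i₀ ∨ ς w.1 = j₀ then Sum.inr w else Sum.inl (ς w.1) with hc₀
  have hc₀val : ∀ w, c₀ w = if ς w.1 = i₀ ∨ ς w.1 = j₀ then Sum.inr w else Sum.inl (ς w.1) :=
    fun w => rfl
  -- acyclicity of initial fibers
  have hac : ∀ b, AcyclicSet B {x | c₀ x = b} := by
    rintro (i | w)
    · -- inl fibers
      have hfib : ∀ x, c₀ x = Sum.inl i → (¬(ς x.1 = i₀ ∨ ς x.1 = j₀)) ∧ ς x.1 = i := by
        intro x hx
        rw [hc₀val] at hx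
        by_cases h : ς x.1 = i₀ ∨ ς x.1 = j₀
        · rw [if_pos h] at hx; exact absurd hx (by simp)
        · rw [if_neg h] at hx
          exact ⟨h, Sum.inl.inj hx⟩
      intro z hz
      refine hςa.2 i z.1 ?_
      refine Relation.TransGen.lift Subtype.val ?_ _ _ hz
      rintro x y ⟨hx, hy, hxy⟩
      obtain ⟨hnx, hex⟩ := hfib x hx
      obtain ⟨hny, hey⟩ := hfib y hy
      have hxv : x.1 ≠ v := fun h => hnx (Or.inr (h ▸ hj₀ ▸ rfl))
      have hyv : y.1 ≠ v := fun h => hny (Or.inr (h ▸ hj₀ ▸ rfl))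
      rcases hxy with h | ⟨h1, _, _⟩ | ⟨h1, _, _⟩
      · exact ⟨hex, hey, h⟩
      · exact absurd h1 hxv
      · exact absurd h1 hyv
    · -- inr fibers: subsingletons
      refine acyclicSet_of_subsingleton (epsRel_irrefl A hirr u v) ?_
      intro x hx y hy
      have hx' : c₀ x = Sum.inr w := hx
      have hy' : c₀ y = Sum.inr w := hy
      rw [hc₀val] at hx' hy'
      by_cases h1 : ς x.1 = i₀ ∨ ς x.1 = j₀
      · rw [if_pos h1] at hx'
        by_cases h2 : ς y.1 = i₀ ∨ ς y.1 = j₀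
        · rw [if_pos h2] at hy'
          exact (Sum.inr.inj hx').trans (Sum.inr.inj hy').symm
        · rw [if_neg h2] at hy'; exact absurd hy' (by simp)
      · rw [if_neg h1] at hx'; exact absurd hx' (by simp)
  -- representatives
  set ι := {i : Fin (dac A) // ¬(i = i₀ ∨ i = j₀)} with hι
  have hreps : ∀ a : ι, ∃ x, c₀ x = Sum.inl a.1 := by
    rintro ⟨i, hi⟩
    obtain ⟨w, hw⟩ := hςa.1 i
    have hwu : w ≠ u := fun h => hi (Or.inl (by rw [← hw, h, hi₀]))
    refine ⟨⟨w, hwu⟩, ?_⟩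
    rw [hc₀val]
    simp only
    rw [if_neg (by rw [hw]; exact hi), hw]
  have hinv : ∀ a b : ι, a ≠ b → (Sum.inl a.1 : Fin (dac A) ⊕ {w : V // w ≠ u}) ≠ Sum.inl b.1 ∧
      ∃ x y, B x y ∧ c₀ x = Sum.inl a.1 ∧ c₀ y = Sum.inl b.1 := by
    rintro ⟨i, hi⟩ ⟨j, hj⟩ hab
    have hij : i ≠ j := fun h => hab (Subtype.ext h)
    refine ⟨fun h => hij (Sum.inl.inj h), ?_⟩
    obtain ⟨x, y, hxy, hx, hy⟩ := hςc.2 i j hij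
    have hxu : x ≠ u := fun h => hi (Or.inl (by rw [← hx, h, hi₀]))
    have hyu : y ≠ u := fun h => hj (Or.inl (by rw [← hy, h, hi₀]))
    refine ⟨⟨x, hxu⟩, ⟨y, hyu⟩, Or.inl hxy, ?_, ?_⟩
    · rw [hc₀val]; simp only; rw [if_neg (by rw [hx]; exact hi), hx]
    · rw [hc₀val]; simp only; rw [if_neg (by rw [hy]; exact hj), hy]
  obtain ⟨m, c', h1, h2, hcard⟩ := merge_lemma B (Finset.image c₀ Finset.univ).card c₀ le_rfl
    hac (fun a : ι => Sum.inl a.1) hreps hinv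
  have hm : m ≤ dac B := mem_le_dac B c' h1 h2
  have hcardι : dac A - 2 ≤ Fintype.card ι := by
    have h3 : Fintype.card ι = Fintype.card (Fin (dac A)) -
        Fintype.card {i : Fin (dac A) // i = i₀ ∨ i = j₀} := Fintype.card_subtype_compl _
    have h4 : Fintype.card {i : Fin (dac A) // i = i₀ ∨ i = j₀} ≤ 2 := by
      have : Fintype.card {i : Fin (dac A) // i = i₀ ∨ i = j₀} =
          ({i₀, j₀} : Finset (Fin (dac A))).card := by
        rw [← Fintype.card_coe]
        apply Fintype.card_congr
        apply Equiv.subtypeEquivRight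
        intro x
        simp [Finset.mem_insert, Finset.mem_singleton]
      rw [this]
      exact le_trans (Finset.card_insert_le _ _) (by simp)
    rw [h3, Fintype.card_fin]
    omega
  omega

end Lower

section EqPart
variable {V : Type*} [Fintype V] [DecidableEq V]

lemma exists_eps_eq (A : V → V → Prop) (hirr : ∀ v : V, ¬ A v v)
    (hpair : ∃ u v : V, u ≠ v ∧ ¬(A u v ∧ A v u)) :
    ∃ u v : V, u ≠ v ∧ ¬(A u v ∧ A v u) ∧ dac (epsRel A u v) = dac A := by
  classical
  obtain ⟨ς, hςa, hςc⟩ := dac_mem A hirr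
  -- there must be two distinct vertices of the same color
  have hsame : ∃ x y : V, x ≠ y ∧ ς x = ς y := by
    by_contra h
    push_neg at h
    have hinj : Function.Injective ς := by
      intro x y hxy
      by_contra hne
      exact h x y hne hxy
    obtain ⟨p, q, hpq, hna⟩ := hpair
    have h1 : ς p ≠ ς q := fun h' => hpq (hinj h')
    obtain ⟨x, y, hxy, hx, hy⟩ := hςc.2 (ς p) (ς q) h1
    have hxp : x = p := hinj hx
    have hyq : y = q := hinj hy
    obtain ⟨x', y', hxy', hx', hy'⟩ := hςc.2 (ς q) (ς p) h1.symm
    have hxq : x' = q := hinj hx'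
    have hyp : y' = p := hinj hy'
    exact hna ⟨hxp ▸ hyq ▸ hxy, hxq ▸ hyp ▸ hxy'⟩
  obtain ⟨x₀, y₀, hxy₀, hcol₀⟩ := hsame
  set b₀ := ς x₀ with hb₀
  set C : Finset V := Finset.univ.filter (fun w => ς w = b₀) with hC
  have hx₀C : x₀ ∈ C := Finset.mem_filter.2 ⟨Finset.mem_univ _, rfl⟩
  have hy₀C : y₀ ∈ C := Finset.mem_filter.2 ⟨Finset.mem_univ _, hcol₀.symm⟩
  set W : V → V → Prop :=
    fun a b => a ∈ {w | ς w = b₀} ∧ b ∈ {w | ς w = b₀} ∧ A a b with hW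
  have hWirr : ∀ z, ¬ Relation.TransGen W z z := hςa.2 b₀
  have hWtrans : Transitive (Relation.TransGen W) := fun _ _ _ h1 h2 => h1.trans h2
  have hWmem : ∀ {z w : V}, Relation.TransGen W z w → ς z = b₀ ∧ ς w = b₀ := by
    intro z w h
    constructor
    · obtain ⟨c, ⟨hz, _, _⟩, _⟩ := tg_head_decomp h
      exact hz
    · induction h with
      | single h => exact h.2.1
      | tail _ h ih => exact h.2.1
  -- choose u minimal in C, v minimal in C.erase u
  obtain ⟨u, huC, humin⟩ := exists_min_rel (Relation.TransGen W) hWtrans hWirr C ⟨x₀, hx₀C⟩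
  have herase : (C.erase u).Nonempty := by
    by_cases h : x₀ = u
    · exact ⟨y₀, Finset.mem_erase.2 ⟨fun he => hxy₀ (h ▸ he ▸ rfl), hy₀C⟩⟩
    · exact ⟨x₀, Finset.mem_erase.2 ⟨h, hx₀C⟩⟩
  obtain ⟨v, hvE, hvmin⟩ := exists_min_rel (Relation.TransGen W) hWtrans hWirr (C.erase u) herase
  have hvC : v ∈ C := (Finset.mem_erase.1 hvE).2
  have hvu : v ≠ u := (Finset.mem_erase.1 hvE).1
  have hςu : ς u = b₀ := (Finset.mem_filter.1 huC).2
  have hςv : ς v = b₀ := (Finset.mem_filter.1 hvC).2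
  have huv : u ≠ v := Ne.symm hvu
  have Hu : ∀ z, ¬ Relation.TransGen W z u := by
    intro z hz
    have hzC : z ∈ C := Finset.mem_filter.2 ⟨Finset.mem_univ _, (hWmem hz).1⟩
    exact humin z hzC hz
  have Hv : ∀ z, z ≠ u → ¬ Relation.TransGen W z v := by
    intro z hzu hz
    have hzC : z ∈ C.erase u := Finset.mem_erase.2
      ⟨hzu, Finset.mem_filter.2 ⟨Finset.mem_univ _, (hWmem hz).1⟩⟩
    exact hvmin z hzC hz
  have hna : ¬(A u v ∧ A v u) := by
    rintro ⟨h1, h2⟩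
    exact hWirr u (Relation.TransGen.tail (Relation.TransGen.single ⟨hςu, hςv, h1⟩)
      ⟨hςv, hςu, h2⟩)
  refine ⟨u, v, huv, hna, le_antisymm (dac_eps_le A hirr u v huv hna) ?_⟩
  -- lower bound: the quotient coloring
  set c' : {w : V // w ≠ u} → Fin (dac A) := fun x => ς x.1 with hc'
  have hsurj : Function.Surjective c' := by
    intro i
    obtain ⟨w, hw⟩ := hςa.1 i
    by_cases hwu : w = u
    · refine ⟨⟨v, hvu⟩, ?_⟩
      rw [hc']
      simp only
      rw [hςv, ← hςu, ← hwu, hw]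
    · exact ⟨⟨w, hwu⟩, hw⟩
  refine mem_le_dac (epsRel A u v) c' ⟨hsurj, ?_⟩ ⟨hsurj, ?_⟩
  · -- acyclicity
    intro i
    by_cases hib : i = b₀
    · -- the class containing the identified vertex
      set m : {w : V // w ≠ u} := ⟨v, hvu⟩ with hm
      have hmem : ∀ x : {w : V // w ≠ u}, x ∈ {z | c' z = i} ↔ ς x.1 = b₀ := by
        intro x
        rw [hib]
        exact Iff.rfl
      have hne_iff : ∀ x : {w : V // w ≠ u}, x ≠ m ↔ x.1 ≠ v := by
        intro x
        constructor
        · intro h h'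
          exact h (Subtype.ext h')
        · intro h h'
          exact h (congrArg Subtype.val h')
      apply nocyc (R := fun x y => x ∈ {z | c' z = i} ∧ y ∈ {z | c' z = i} ∧ epsRel A u v x y)
        (m := m)
      · -- H1 : no cycles avoiding m
        intro a ha
        refine hWirr a.1 ?_
        refine Relation.TransGen.lift Subtype.val ?_ _ _ ha
        rintro p q ⟨⟨hp, hq, hpq⟩, hpm, hqm⟩
        have hpv : p.1 ≠ v := (hne_iff p).1 hpm
        have hqv : q.1 ≠ v := (hne_iff q).1 hqm
        rcases hpq with h | ⟨h1, _, _⟩ | ⟨h1, _, _⟩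
        · exact ⟨(hmem p).1 hp, (hmem q).1 hq, h⟩
        · exact absurd h1 hpv
        · exact absurd h1 hqv
      · -- H2 : no loop at m
        rintro ⟨_, _, h⟩
        exact epsRel_irrefl A hirr u v m h
      · -- H3 : no cycle through m with m-free interior
        rintro ⟨p, q, hpm, hqm, ⟨hm1, hp1, hmp⟩, hrtg, ⟨hq1, hm2, hqmr⟩⟩
        have hpv : p.1 ≠ v := (hne_iff p).1 hpm
        have hqv : q.1 ≠ v := (hne_iff q).1 hqm
        have hpb : ς p.1 = b₀ := (hmem p).1 hp1
        have hqb : ς q.1 = b₀ := (hmem q).1 hq1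
        -- first step out of m
        have hstep1 : ∃ a, (a = u ∨ a = v) ∧ W a p.1 := by
          rcases hmp with h | ⟨_, _, h3⟩ | ⟨h1, _, _⟩
          · exact ⟨v, Or.inr rfl, ⟨hςv, hpb, h⟩⟩
          · exact ⟨u, Or.inl rfl, ⟨hςu, hpb, h3⟩⟩
          · exact absurd h1 hpv
        -- middle
        have hmid : Relation.ReflTransGen W p.1 q.1 := by
          refine Relation.ReflTransGen.lift Subtype.val ?_ _ _ hrtg
          rintro s t ⟨⟨hs, ht, hst⟩, hsm, htm⟩
          have hsv : s.1 ≠ v := (hne_iff s).1 hsm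
          have htv : t.1 ≠ v := (hne_iff t).1 htm
          rcases hst with h | ⟨h1, _, _⟩ | ⟨h1, _, _⟩
          · exact ⟨(hmem s).1 hs, (hmem t).1 ht, h⟩
          · exact absurd h1 hsv
          · exact absurd h1 htv
        -- last step into m
        have hstep2 : ∃ b, (b = u ∨ b = v) ∧ W q.1 b := by
          rcases hqmr with h | ⟨h1, _, _⟩ | ⟨_, _, h3⟩
          · exact ⟨v, Or.inr rfl, ⟨hqb, hςv, h⟩⟩
          · exact absurd h1 hqv
          · exact ⟨u, Or.inl rfl, ⟨hqb, hςu, h3⟩⟩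
        obtain ⟨a, haor, hWa⟩ := hstep1
        obtain ⟨b, hbor, hWb⟩ := hstep2
        have hT : Relation.TransGen W p.1 b := Relation.TransGen.tail' hmid hWb
        rcases hbor with hb | hb
        · exact Hu p.1 (hb ▸ hT)
        · rcases haor with ha | ha
          · -- a = u : a length ≥ 2 path from u to v
            have hp1u : p.1 ≠ u := by
              intro h
              rw [ha, h] at hWa
              exact hirr u hWa.2.2
            exact Hv p.1 hp1u (hb ▸ hT)
          · -- a = v : cycle at v
            have : Relation.TransGen W v v :=
              Relation.TransGen.head' (ha ▸ hWa) (hb ▸ hT).to_reflTransGen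
            exact hWirr v this
    · -- other classes: no vertex mapping to v
      intro z hz
      refine hςa.2 i z.1 ?_
      refine Relation.TransGen.lift Subtype.val ?_ _ _ hz
      rintro p q ⟨hp, hq, hpq⟩
      have hpi : ς p.1 = i := hp
      have hqi : ς q.1 = i := hq
      have hpv : p.1 ≠ v := fun h => hib (by rw [← hpi, h, hςv])
      have hqv : q.1 ≠ v := fun h => hib (by rw [← hqi, h, hςv])
      rcases hpq with h | ⟨h1, _, _⟩ | ⟨h1, _, _⟩
      · exact ⟨hpi, hqi, h⟩
      · exact absurd h1 hpv
      · exact absurd h1 hqv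
  · -- completeness
    intro i j hij
    obtain ⟨x, y, hxy, hx, hy⟩ := hςc.2 i j hij
    by_cases hxu : x = u
    · have hyu : y ≠ u := fun h => hij (by rw [← hx, ← hy, hxu, h])  -- check
      have hyv : y ≠ v := by
        intro h
        have e1 : i = b₀ := by rw [← hx, hxu, hςu]
        have e2 : j = b₀ := by rw [← hy, h, hςv]
        exact hij (e1.trans e2.symm)
      refine ⟨⟨v, hvu⟩, ⟨y, hyu⟩, Or.inr (Or.inl ⟨rfl, hyv, hxu ▸ hxy⟩), ?_, hy⟩
      show ς v = i
      exact ((hςv.trans hςu.symm).trans (congrArg ς hxu).symm).trans hx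
    · by_cases hyu : y = u
      · have hxv : x ≠ v := by
          intro h
          apply hij
          rw [← hx, ← hy, hyu, h, hςu, hςv]
        refine ⟨⟨x, hxu⟩, ⟨v, hvu⟩, Or.inr (Or.inr ⟨rfl, hxv, hyu ▸ hxy⟩),
          hx, ?_⟩
        show ς v = j
        exact ((hςv.trans hςu.symm).trans (congrArg ς hyu).symm).trans hy
      · exact ⟨⟨x, hxu⟩, ⟨y, hyu⟩, Or.inl hxy, hx, hy⟩

end EqPart


end AuxLemmas

/-- If `ε` is an elementary dihomomorphism of a digraph `D`, then
`dac(D) - 2 ≤ dac(ε(D)) ≤ dac(D)`; moreover, if `D` has a pair of nonadjacent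
vertices, then some elementary dihomomorphism `ε` of `D` satisfies
`dac(ε(D)) = dac(D)`. -/
theorem stmt17 {V : Type*} [Fintype V] [DecidableEq V] (A : V → V → Prop)
    (hirr : ∀ v : V, ¬ A v v) :
    (∀ u v : V, u ≠ v → ¬(A u v ∧ A v u) →
        dac A - 2 ≤ dac (epsRel A u v) ∧ dac (epsRel A u v) ≤ dac A) ∧
      ((∃ u v : V, u ≠ v ∧ ¬(A u v ∧ A v u)) →
        ∃ u v : V, u ≠ v ∧ ¬(A u v ∧ A v u) ∧
          dac (epsRel A u v) = dac A) := by
  constructor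
  · intro u v huv hna
    exact ⟨dac_sub_two_le A hirr u v huv, dac_eps_le A hirr u v huv hna⟩
  · intro hpair
    exact exists_eps_eq A hirr hpair
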